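/- arXiv:2411.18144 — 2 statements merged into one kernel-verified Lean document; each statement's English description precedes it below -/
import Mathlib

section
/- Let γ1, γ2, γ3, γ4, γ5, γ6, γ7, τ, w, w', R, R' be positive reals with γ2 + γ5 > γ3, and set S = γ1 + γ2 + γ4 + γ5 + γ6 + γ7. Define u(c, n, e, p, s, q) = γ1 ln c + γ2 ln n + γ3 ln e + γ4 ln p + γ5 ln(n w') + γ6 ln(R s) + γ7 ln(R' q). Then for every tuple of positive reals (c, n, e, p, s, q) satisfying the budget constraint w(1 − τ n) = c + s + e n + p + q, one has u(c, n, e, p, s, q) ≤ u(c*, n*, e*, p*, s*, q*), where c* = γ1 w/S, s* = γ6 w/S, p* = γ4 w/S, q* = γ7 w/S, n* = (γ2 + γ5 − γ3)/(τ S), e* = γ3 w τ/(γ2 + γ5 − γ3). That is, the stated formulas globally maximize lifetime utility subject to the budget constraint. -/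
/-- The stated formulas globally maximize lifetime utility subject
to the budget constraint. -/
theorem optimum_is_global_max
    (γ1 γ2 γ3 γ4 γ5 γ6 γ7 τ w w' R R' : ℝ)
    (h1 : 0 < γ1) (h2 : 0 < γ2) (h3 : 0 < γ3) (h4 : 0 < γ4)
    (h5 : 0 < γ5) (h6 : 0 < γ6) (h7 : 0 < γ7)
    (hτ : 0 < τ) (hw : 0 < w) (hw' : 0 < w') (hR : 0 < R) (hR' : 0 < R')
    (hqq : γ3 < γ2 + γ5)
    (S : ℝ) (hS : S = γ1 + γ2 + γ4 + γ5 + γ6 + γ7)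
    (u : ℝ → ℝ → ℝ → ℝ → ℝ → ℝ → ℝ)
    (hu : ∀ c n e p s q : ℝ,
      u c n e p s q = γ1 * Real.log c + γ2 * Real.log n + γ3 * Real.log e
        + γ4 * Real.log p + γ5 * Real.log (n * w')
        + γ6 * Real.log (R * s) + γ7 * Real.log (R' * q))
    (cStar nStar eStar pStar sStar qStar : ℝ)
    (hc : cStar = γ1 * w / S) (hs : sStar = γ6 * w / S)
    (hp : pStar = γ4 * w / S) (hq : qStar = γ7 * w / S)
    (hn : nStar = (γ2 + γ5 - γ3) / (τ * S))
    (he : eStar = γ3 * w * τ / (γ2 + γ5 - γ3)) :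
    ∀ c n e p s q : ℝ,
      0 < c → 0 < n → 0 < e → 0 < p → 0 < s → 0 < q →
      w * (1 - τ * n) = c + s + e * n + p + q →
      u c n e p s q ≤ u cStar nStar eStar pStar sStar qStar := by
  intro c n e p s q hc0 hn0 he0 hp0 hs0 hq0 hb
  have hA : (0:ℝ) < γ2 + γ5 - γ3 := by linarith
  have hS0 : 0 < S := by rw [hS]; linarith
  have hcS : 0 < cStar := by rw [hc]; positivity
  have hsS : 0 < sStar := by rw [hs]; positivity
  have hpS : 0 < pStar := by rw [hp]; positivity
  have hqS : 0 < qStar := by rw [hq]; positivity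
  have hnS : 0 < nStar := by rw [hn]; positivity
  have heS : 0 < eStar := by rw [he]; positivity
  have key : ∀ a x y : ℝ, 0 ≤ a → 0 < x → 0 < y →
      a * (Real.log x - Real.log y) ≤ a * (x / y) - a := by
    intro a x y ha hx hy
    have h := Real.log_le_sub_one_of_pos (div_pos hx hy)
    rw [Real.log_div hx.ne' hy.ne'] at h
    nlinarith [mul_le_mul_of_nonneg_left h ha]
  have k1 := key γ1 c cStar h1.le hc0 hcS
  have k2 := key (γ2+γ5-γ3) n nStar hA.le hn0 hnS
  have k3 := key γ3 (e*n) (eStar*nStar) h3.le (mul_pos he0 hn0) (mul_pos heS hnS)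
  have k4 := key γ4 p pStar h4.le hp0 hpS
  have k6 := key γ6 s sStar h6.le hs0 hsS
  have k7 := key γ7 q qStar h7.le hq0 hqS
  rw [Real.log_mul he0.ne' hn0.ne', Real.log_mul heS.ne' hnS.ne'] at k3
  have e1 : γ1*(c/cStar) = S/w*c := by rw [hc]; field_simp
  have e2 : (γ2+γ5-γ3)*(n/nStar) = S*τ*n := by rw [hn]; field_simp
  have e3 : γ3*((e*n)/(eStar*nStar)) = S/w*(e*n) := by
    rw [he, hn]; field_simp
  have e4 : γ4*(p/pStar) = S/w*p := by rw [hp]; field_simp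
  have e6 : γ6*(s/sStar) = S/w*s := by rw [hs]; field_simp
  have e7 : γ7*(q/qStar) = S/w*q := by rw [hq]; field_simp
  have hsum : γ1*(c/cStar) - γ1 + ((γ2+γ5-γ3)*(n/nStar) - (γ2+γ5-γ3))
      + (γ3*((e*n)/(eStar*nStar)) - γ3) + (γ4*(p/pStar) - γ4)
      + (γ6*(s/sStar) - γ6) + (γ7*(q/qStar) - γ7) = 0 := by
    rw [e1, e2, e3, e4, e6, e7]
    have hw0 : w ≠ 0 := hw.ne'
    field_simp
    linear_combination (-S) * hb + w * hS
  rw [hu, hu]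
  rw [Real.log_mul hn0.ne' hw'.ne', Real.log_mul hR.ne' hs0.ne',
      Real.log_mul hR'.ne' hq0.ne', Real.log_mul hnS.ne' hw'.ne',
      Real.log_mul hR.ne' hsS.ne', Real.log_mul hR'.ne' hqS.ne']
  linarith [k1, k2, k3, k4, k6, k7, hsum]
end

section
/- Let γ1, γ3, γ4, γ5, γ6, γ7, τ be positive reals. The optimal number of children n(γ2) = (γ2 + γ5 − γ3)/(τ(γ1 + γ2 + γ4 + γ5 + γ6 + γ7)), viewed as a function of γ2 on (0, ∞), has derivative at each γ2 > 0 equal to (γ1 + γ3 + γ4 + γ6 + γ7)/(τ S²), where S = γ1 + γ2 + γ4 + γ5 + γ6 + γ7; in particular this derivative is strictly positive, so the optimal number of children is strictly increasing in the weight γ2 on the number of children. -/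
/-- The optimal number of children is strictly increasing in the
weight γ2 on the number of children. -/
theorem children_increasing_in_child_weight
    (γ1 γ3 γ4 γ5 γ6 γ7 τ : ℝ)
    (h1 : 0 < γ1) (h3 : 0 < γ3) (h4 : 0 < γ4)
    (h5 : 0 < γ5) (h6 : 0 < γ6) (h7 : 0 < γ7) (hτ : 0 < τ) :
    ∀ γ2 : ℝ, 0 < γ2 →
      HasDerivAt (fun x : ℝ => (x + γ5 - γ3) / (τ * (γ1 + x + γ4 + γ5 + γ6 + γ7)))
        ((γ1 + γ3 + γ4 + γ6 + γ7) / (τ * (γ1 + γ2 + γ4 + γ5 + γ6 + γ7) ^ 2)) γ2 ∧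
      0 < (γ1 + γ3 + γ4 + γ6 + γ7) / (τ * (γ1 + γ2 + γ4 + γ5 + γ6 + γ7) ^ 2) := by
  intro γ2 h2
  have hS : 0 < γ1 + γ2 + γ4 + γ5 + γ6 + γ7 := by linarith
  have hD : τ * (γ1 + γ2 + γ4 + γ5 + γ6 + γ7) ≠ 0 := by positivity
  constructor
  · have hnum : HasDerivAt (fun x : ℝ => x + γ5 - γ3) 1 γ2 := by
      simpa using ((hasDerivAt_id γ2).add_const γ5).sub_const γ3
    have hden : HasDerivAt (fun x : ℝ => τ * (γ1 + x + γ4 + γ5 + γ6 + γ7)) τ γ2 := by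
      have : HasDerivAt (fun x : ℝ => γ1 + x + γ4 + γ5 + γ6 + γ7) 1 γ2 := by
        simpa using (((((hasDerivAt_id γ2).const_add γ1).add_const γ4).add_const γ5).add_const γ6).add_const γ7
      simpa using this.const_mul τ
    have := hnum.div hden hD
    have e : (γ1 + γ3 + γ4 + γ6 + γ7) / (τ * (γ1 + γ2 + γ4 + γ5 + γ6 + γ7) ^ 2) = (1 * (τ * (γ1 + γ2 + γ4 + γ5 + γ6 + γ7)) - (γ2 + γ5 - γ3) * τ) / (τ * (γ1 + γ2 + γ4 + γ5 + γ6 + γ7)) ^ 2 := by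
      rw [div_eq_div_iff (by positivity) (by positivity)]
      ring
    rw [e]
    exact this
  · positivity
end
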